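/- If g and f are real-valued functions on an extremally disconnected topological space X with f lower semicontinuous, g upper semicontinuous, and f ≤ g, then there exists a continuous function h : X → ℝ with f ≤ h ≤ g. -/
import Mathlib


open Set

variable {X : Type*} [TopologicalSpace X]

/-- The kernel `A^Λ`: intersection of all open sets containing `A`. -/
def kernelSet (A : Set X) : Set X := ⋂₀ {O | IsOpen O ∧ A ⊆ O}

/-- The V-hull `A^V`: union of all closed sets contained in `A`. -/
def vHull (A : Set X) : Set X := ⋃₀ {F | IsClosed F ∧ F ⊆ A}

/-- An F_σ set: a countable union of closed sets. -/
def IsFsigma (A : Set X) : Prop :=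
  ∃ S : Set (Set X), S.Countable ∧ (∀ F ∈ S, IsClosed F) ∧ A = ⋃₀ S

theorem insertion_extremallyDisconnected_continuous
    [ExtremallyDisconnected X]
    (f g : X → ℝ)
    (hf : ∀ t : ℝ, IsOpen (f ⁻¹' Set.Ioi t))
    (hg : ∀ t : ℝ, IsOpen (g ⁻¹' Set.Iio t))
    (hfg : f ≤ g) :
    ∃ h : X → ℝ, Continuous h ∧ f ≤ h ∧ h ≤ g := by
  classical
  set A : ℚ → Set X := fun q => closure (f ⁻¹' Set.Ioi (q : ℝ)) with hA
  have hAopen : ∀ q, IsOpen (A q) := fun q =>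
    ExtremallyDisconnected.open_closure _ (hf q)
  have hAmono : ∀ q r : ℚ, q ≤ r → A r ⊆ A q := fun q r hqr =>
    closure_mono (fun x hx => lt_of_le_of_lt (show (q : ℝ) ≤ (r : ℝ) by exact_mod_cast hqr) hx)
  have hAg : ∀ q x, x ∈ A q → (q : ℝ) ≤ g x := by
    intro q x hx
    have hsub : A q ⊆ g ⁻¹' Set.Ici (q : ℝ) := by
      apply closure_minimal
      · intro y hy
        exact le_of_lt (lt_of_lt_of_le hy (hfg y))
      · have : g ⁻¹' Set.Ici (q : ℝ) = (g ⁻¹' Set.Iio (q : ℝ))ᶜ := by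
          ext y; simp [not_lt]
        rw [this]
        exact isClosed_compl_iff.mpr (hg q)
    exact hsub hx
  have hAf : ∀ (q : ℚ) (x : X), (q : ℝ) < f x → x ∈ A q := fun q x hx =>
    subset_closure hx
  set S : X → Set ℝ := fun x => (fun q : ℚ => (q : ℝ)) '' {q | x ∈ A q} with hS
  have hSne : ∀ x, (S x).Nonempty := by
    intro x
    obtain ⟨q, hq⟩ := exists_rat_lt (f x)
    exact ⟨q, ⟨q, hAf q x hq, rfl⟩⟩
  have hSbdd : ∀ x, BddAbove (S x) := by
    intro x
    refine ⟨g x, ?_⟩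
    rintro t ⟨q, hq, rfl⟩
    exact hAg q x hq
  set h : X → ℝ := fun x => sSup (S x) with hh
  have hmem_le : ∀ (q : ℚ) (x : X), x ∈ A q → (q : ℝ) ≤ h x := fun q x hx =>
    le_csSup (hSbdd x) ⟨q, hx, rfl⟩
  have hnotmem : ∀ (q : ℚ) (x : X), x ∉ A q → h x ≤ (q : ℝ) := by
    intro q x hx
    apply csSup_le (hSne x)
    rintro t ⟨r, hr, rfl⟩
    by_contra hlt
    push_neg at hlt
    have : q ≤ r := by exact_mod_cast le_of_lt hlt
    exact hx (hAmono q r this hr)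
  have hfh : f ≤ h := by
    intro x
    by_contra hlt
    push_neg at hlt
    obtain ⟨q, hq1, hq2⟩ := exists_rat_btwn hlt
    exact absurd (hmem_le q x (hAf q x hq2)) (not_le.mpr hq1)
  have hhg : h ≤ g := by
    intro x
    apply csSup_le (hSne x)
    rintro t ⟨q, hq, rfl⟩
    exact hAg q x hq
  refine ⟨h, ?_, hfh, hhg⟩
  rw [continuous_iff_lower_upperSemicontinuous]
  constructor
  · rw [lowerSemicontinuous_iff_isOpen_preimage]
    intro t
    have : h ⁻¹' Set.Ioi t = ⋃ q ∈ {q : ℚ | t < (q : ℝ)}, A q := by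
      ext x
      simp only [Set.mem_preimage, Set.mem_Ioi, Set.mem_iUnion, Set.mem_setOf_eq]
      constructor
      · intro hx
        obtain ⟨s, ⟨q, hq, rfl⟩, hs⟩ := exists_lt_of_lt_csSup (hSne x) hx
        exact ⟨q, hs, hq⟩
      · rintro ⟨q, hq, hx⟩
        exact lt_of_lt_of_le hq (hmem_le q x hx)
    rw [this]
    exact isOpen_biUnion fun q _ => hAopen q
  · rw [upperSemicontinuous_iff_isOpen_preimage]
    intro t
    have : h ⁻¹' Set.Iio t = ⋃ q ∈ {q : ℚ | (q : ℝ) < t}, (A q)ᶜ := by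
      ext x
      simp only [Set.mem_preimage, Set.mem_Iio, Set.mem_iUnion, Set.mem_setOf_eq,
        Set.mem_compl_iff]
      constructor
      · intro hx
        obtain ⟨q, hq1, hq2⟩ := exists_rat_btwn hx
        refine ⟨q, hq2, fun hmem => ?_⟩
        exact absurd (hmem_le q x hmem) (not_le.mpr hq1)
      · rintro ⟨q, hq, hx⟩
        exact lt_of_le_of_lt (hnotmem q x hx) hq
    rw [this]
    exact isOpen_biUnion fun q _ => (isClosed_closure).isOpen_compl
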